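/- Non-zero entropy property of capacity achieving ULDCs (Lemma 3, Property 1): let N ≥ 2, K ≥ 1, and consider a universal locally decodable code (ULDC) with locality N, K source symbols of entropy L_w > 0, M coded symbols of entropy L_x, and symbol rate L_w/L_x = C*(N,K). Then for every i ∈ {1,…,M} and every k ∈ {1,…,K}, H(X_i | W_k̄) > 0, where W_k̄ denotes the tuple of all source symbols other than W_k. -/

import Mathlib

open scoped BigOperators

noncomputable section

/-- A finite probability space: a finite type together with a probability mass function. -/
structure FinProbSpace where
  Ω : Type
  [fin : Fintype Ω]
  p : Ω → ℝ
  nonneg : ∀ ω, 0 ≤ p ω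
  sum_one : ∑ ω, p ω = 1

attribute [instance] FinProbSpace.fin

namespace FinProbSpace

variable (P : FinProbSpace)

/-- Probability that the random variable `X` takes the value `a`. -/
def prob {α : Type} [DecidableEq α] (X : P.Ω → α) (a : α) : ℝ :=
  ∑ ω, if X ω = a then P.p ω else 0

/-- Shannon entropy (in bits) of a finitely valued random variable. -/
def H {α : Type} [Fintype α] [DecidableEq α] (X : P.Ω → α) : ℝ :=
  ∑ a, -(P.prob X a * Real.logb 2 (P.prob X a))

/-- Conditional Shannon entropy `H(X | Y) = H(X, Y) - H(Y)` (in bits). -/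
def condH {α β : Type} [Fintype α] [DecidableEq α] [Fintype β] [DecidableEq β]
    (X : P.Ω → α) (Y : P.Ω → β) : ℝ :=
  P.H (fun ω => (X ω, Y ω)) - P.H Y

/-- The tuple random variable `(X_i)_{i ∈ ι}`. -/
def tuple {ι V : Type} (X : ι → P.Ω → V) : P.Ω → ι → V := fun ω i => X i ω

/-- Joint (mutual) independence of a finite family of random variables. -/
def iIndep {ι V : Type} [Fintype ι] [DecidableEq ι] [DecidableEq V] (X : ι → P.Ω → V) : Prop :=
  ∀ a : ι → V, P.prob (P.tuple X) a = ∏ i, P.prob (X i) (a i)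

/-- `X` and `Y` contain the same information about everything beyond `Z`:
`H(X | Y, Z) = H(Y | X, Z) = 0`. -/
def sameInfo {α β γ : Type} [Fintype α] [DecidableEq α] [Fintype β] [DecidableEq β]
    [Fintype γ] [DecidableEq γ] (X : P.Ω → α) (Y : P.Ω → β) (Z : P.Ω → γ) : Prop :=
  P.condH X (fun ω => (Y ω, Z ω)) = 0 ∧ P.condH Y (fun ω => (X ω, Z ω)) = 0

end FinProbSpace

/-- A locally decodable code with `K` source symbols of entropy `Lw`, `M` coded symbols of
entropy `Lx`, and locality `N`. -/
structure LDC (K N M : ℕ) (Lw Lx : ℝ) where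
  P : FinProbSpace
  V : Type
  [fV : Fintype V]
  [dV : DecidableEq V]
  V' : Type
  [fV' : Fintype V']
  [dV' : DecidableEq V']
  /-- the source symbols -/
  W : Fin K → P.Ω → V
  /-- the coded symbols -/
  X : Fin M → P.Ω → V'
  indep : P.iIndep W
  HW : ∀ k, P.H (W k) = Lw
  coded_fn : ∀ m, ∃ f : (Fin K → V) → V', ∀ ω, X m ω = f (fun k => W k ω)
  HX : ∀ m, P.H (X m) = Lx
  /-- the decoding supersets -/
  decSets : Fin K → Finset (Finset (Fin M))
  decSets_nonempty : ∀ k, (decSets k).Nonempty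
  decSets_card : ∀ k, ∀ s ∈ decSets k, s.card = N
  decodes : ∀ k, ∀ s ∈ decSets k,
    P.condH (W k) (P.tuple fun i : {x // x ∈ s} => X i.1) = 0

attribute [instance] LDC.fV LDC.dV LDC.fV' LDC.dV'

/-- A universal LDC: every coded symbol appears in some decoding set of every source symbol. -/
def LDC.IsUniversal {K N M : ℕ} {Lw Lx : ℝ} (C : LDC K N M Lw Lx) : Prop :=
  ∀ (m : Fin M) (k : Fin K), ∃ s ∈ C.decSets k, m ∈ s

/-- A perfectly smooth LDC: for each source symbol, every coded symbol lies in the same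
number of decoding sets. -/
def LDC.IsSmooth {K N M : ℕ} {Lw Lx : ℝ} (C : LDC K N M Lw Lx) : Prop :=
  ∀ (k : Fin K) (m m' : Fin M),
    ((C.decSets k).filter (fun s => m ∈ s)).card =
      ((C.decSets k).filter (fun s => m' ∈ s)).card

/-- `C*(N, K) = N (1 + 1/N + ⋯ + 1/N^{K-1})⁻¹`. -/
def Cstar (N K : ℕ) : ℝ := N / (∑ j ∈ Finset.range K, (1 / (N : ℝ)) ^ j)

/-- An `N`-query information retrieval scheme with `K` messages of entropy `Lw` and
answer sets of sizes `Mn n` with answers of entropy `Lx`. -/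
structure IRScheme (K N : ℕ) (Mn : Fin N → ℕ) (Lw Lx : ℝ) where
  P : FinProbSpace
  V : Type
  [fV : Fintype V]
  [dV : DecidableEq V]
  V' : Type
  [fV' : Fintype V']
  [dV' : DecidableEq V']
  /-- the messages -/
  W : Fin K → P.Ω → V
  /-- `A n m` is the `m`-th possible answer of database `n` -/
  A : (n : Fin N) → Fin (Mn n) → P.Ω → V'
  indep : P.iIndep W
  HW : ∀ k, P.H (W k) = Lw
  ans_fn : ∀ n m, ∃ f : (Fin K → V) → V', ∀ ω, A n m ω = f (fun k => W k ω)
  HA : ∀ n m, P.H (A n m) = Lx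
  /-- the decoding supersets: each decoding set consists of one answer index per database -/
  Q : Fin K → Finset ((n : Fin N) → Fin (Mn n))
  Q_nonempty : ∀ k, (Q k).Nonempty
  decodes : ∀ k, ∀ q ∈ Q k, P.condH (W k) (P.tuple fun n => A n (q n)) = 0

attribute [instance] IRScheme.fV IRScheme.dV IRScheme.fV' IRScheme.dV'

/-- A repudiative (RIR_max) scheme: every possible answer of every database appears in some
decoding set of every message. -/
def IRScheme.IsRIR {K N : ℕ} {Mn : Fin N → ℕ} {Lw Lx : ℝ} (C : IRScheme K N Mn Lw Lx) : Prop :=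
  ∀ (n : Fin N) (m : Fin (Mn n)) (k : Fin K), ∃ q ∈ C.Q k, q n = m

/-- A perfectly private (PIR_max) scheme: for each message there is a distribution on its
decoding sets such that the marginal distribution of the query to each database does not
depend on the message. -/
def IRScheme.IsPIR {K N : ℕ} {Mn : Fin N → ℕ} {Lw Lx : ℝ} (C : IRScheme K N Mn Lw Lx) : Prop :=
  ∃ μ : Fin K → ((n : Fin N) → Fin (Mn n)) → ℝ,
    (∀ k q, 0 ≤ μ k q) ∧ (∀ k, ∑ q ∈ C.Q k, μ k q = 1) ∧
    (∀ (k k' : Fin K) (n : Fin N) (m : Fin (Mn n)),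
      ∑ q ∈ (C.Q k).filter (fun q => q n = m), μ k q =
        ∑ q ∈ (C.Q k').filter (fun q => q n = m), μ k' q)

/-- `C_K(N) = (1 + 1/N + ⋯ + 1/N^{K-1})⁻¹`, the capacity of PIR. -/
def CK (N K : ℕ) : ℝ := (∑ j ∈ Finset.range K, (1 / (N : ℝ)) ^ j)⁻¹
namespace FinProbSpace

variable (P : FinProbSpace)

lemma prob_nonneg {α : Type} [DecidableEq α] (X : P.Ω → α) (a : α) : 0 ≤ P.prob X a := by
  apply Finset.sum_nonneg; intro ω _; split <;> simp [P.nonneg ω]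

lemma prob_le_one {α : Type} [DecidableEq α] (X : P.Ω → α) (a : α) : P.prob X a ≤ 1 := by
  rw [← P.sum_one]; apply Finset.sum_le_sum; intro ω _; split <;> simp [P.nonneg ω]

lemma sum_prob {α : Type} [Fintype α] [DecidableEq α] (X : P.Ω → α) :
    ∑ a, P.prob X a = 1 := by
  unfold prob
  rw [Finset.sum_comm, ← P.sum_one]
  refine Finset.sum_congr rfl fun ω _ => ?_
  simp

lemma prob_mono {α β : Type} [DecidableEq α] [DecidableEq β] {X : P.Ω → α} {Y : P.Ω → β}
    {a : α} {b : β} (h : ∀ ω, X ω = a → Y ω = b) : P.prob X a ≤ P.prob Y b := by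
  apply Finset.sum_le_sum; intro ω _
  by_cases hx : X ω = a
  · rw [if_pos hx, if_pos (h ω hx)]
  · rw [if_neg hx]; split <;> simp [P.nonneg ω]

lemma prob_pair_left {α β : Type} [Fintype α] [DecidableEq α] [DecidableEq β]
    (X : P.Ω → α) (Y : P.Ω → β) (b : β) :
    ∑ a, P.prob (fun ω => (X ω, Y ω)) (a, b) = P.prob Y b := by
  unfold prob
  rw [Finset.sum_comm]
  refine Finset.sum_congr rfl fun ω _ => ?_
  rw [Finset.sum_eq_single (X ω)]
  · simp
  · intro a _ ha; rw [if_neg]; simp [Prod.ext_iff]; intro h; exact absurd h.symm ha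
  · simp

lemma prob_pair_right {α β : Type} [DecidableEq α] [Fintype β] [DecidableEq β]
    (X : P.Ω → α) (Y : P.Ω → β) (a : α) :
    ∑ b, P.prob (fun ω => (X ω, Y ω)) (a, b) = P.prob X a := by
  unfold prob
  rw [Finset.sum_comm]
  refine Finset.sum_congr rfl fun ω _ => ?_
  rw [Finset.sum_eq_single (Y ω)]
  · simp
  · intro b _ hb; rw [if_neg]; simp [Prod.ext_iff]; intro _ h; exact absurd h.symm hb
  · simp

end FinProbSpace
namespace FinProbSpace

variable (P : FinProbSpace)

lemma prob3_XZ {α β γ : Type} [DecidableEq α] [Fintype β] [DecidableEq β] [DecidableEq γ]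
    (X : P.Ω → α) (Y : P.Ω → β) (Z : P.Ω → γ) (a : α) (c : γ) :
    ∑ b, P.prob (fun ω => (X ω, Y ω, Z ω)) (a, b, c) =
      P.prob (fun ω => (X ω, Z ω)) (a, c) := by
  unfold prob
  rw [Finset.sum_comm]
  refine Finset.sum_congr rfl fun ω _ => ?_
  rw [Finset.sum_eq_single (Y ω)]
  · by_cases h : X ω = a ∧ Z ω = c
    · rw [if_pos (by simp [h.1, h.2]), if_pos (by simp [h.1, h.2])]
    · rw [if_neg (by simp [Prod.ext_iff]; tauto), if_neg (by simp [Prod.ext_iff]; tauto)]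
  · intro b _ hb; rw [if_neg]; simp [Prod.ext_iff]; intro _ h; exact absurd h.symm hb
  · simp

lemma prob3_YZ {α β γ : Type} [Fintype α] [DecidableEq α] [DecidableEq β] [DecidableEq γ]
    (X : P.Ω → α) (Y : P.Ω → β) (Z : P.Ω → γ) (b : β) (c : γ) :
    ∑ a, P.prob (fun ω => (X ω, Y ω, Z ω)) (a, b, c) =
      P.prob (fun ω => (Y ω, Z ω)) (b, c) := by
  unfold prob
  rw [Finset.sum_comm]
  refine Finset.sum_congr rfl fun ω _ => ?_
  rw [Finset.sum_eq_single (X ω)]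
  · by_cases h : Y ω = b ∧ Z ω = c
    · rw [if_pos (by simp [h.1, h.2]), if_pos (by simp [h.1, h.2])]
    · rw [if_neg (by simp [Prod.ext_iff]; tauto), if_neg (by simp [Prod.ext_iff]; tauto)]
  · intro a _ ha; rw [if_neg]; simp [Prod.ext_iff]; intro h; exact absurd h.symm ha
  · simp

lemma prob3_Z {α β γ : Type} [Fintype α] [DecidableEq α] [Fintype β] [DecidableEq β]
    [DecidableEq γ] (X : P.Ω → α) (Y : P.Ω → β) (Z : P.Ω → γ) (c : γ) :
    ∑ a, ∑ b, P.prob (fun ω => (X ω, Y ω, Z ω)) (a, b, c) = P.prob Z c := by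
  have : ∀ a, ∑ b, P.prob (fun ω => (X ω, Y ω, Z ω)) (a, b, c) =
      P.prob (fun ω => (X ω, Z ω)) (a, c) := fun a => P.prob3_XZ X Y Z a c
  rw [Finset.sum_congr rfl fun a _ => this a]
  exact P.prob_pair_left X Z c

lemma H_nonneg {α : Type} [Fintype α] [DecidableEq α] (X : P.Ω → α) : 0 ≤ P.H X := by
  apply Finset.sum_nonneg; intro a _
  have h1 := P.prob_nonneg X a
  have h2 := P.prob_le_one X a
  have : P.prob X a * Real.logb 2 (P.prob X a) ≤ 0 :=
    mul_nonpos_of_nonneg_of_nonpos h1 (Real.logb_nonpos one_lt_two h1 h2)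
  linarith

lemma H_comp_inj {α β : Type} [Fintype α] [DecidableEq α] [Fintype β] [DecidableEq β]
    {g : α → β} (hg : Function.Injective g) (X : P.Ω → α) :
    P.H (fun ω => g (X ω)) = P.H X := by
  have key : ∀ a : α, P.prob (fun ω => g (X ω)) (g a) = P.prob X a := by
    intro a
    unfold prob
    refine Finset.sum_congr rfl fun ω _ => ?_
    simp [hg.eq_iff]
  unfold H
  rw [← Finset.sum_subset (Finset.subset_univ (Finset.univ.image g))]
  · rw [Finset.sum_image (fun a _ a' _ h => hg h)]
    refine Finset.sum_congr rfl fun a _ => ?_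
    rw [key a]
  · intro b _ hb
    have h0 : P.prob (fun ω => g (X ω)) b = 0 := by
      apply Finset.sum_eq_zero; intro ω _
      rw [if_neg]
      intro h
      exact hb (Finset.mem_image.mpr ⟨X ω, Finset.mem_univ _, h⟩)
    rw [h0]
    simp

lemma condH_comp_inj {α β γ : Type} [Fintype α] [DecidableEq α] [Fintype β] [DecidableEq β]
    [Fintype γ] [DecidableEq γ] {g : α → β} (hg : Function.Injective g)
    (X : P.Ω → α) (Z : P.Ω → γ) :
    P.condH (fun ω => g (X ω)) Z = P.condH X Z := by
  unfold condH
  congr 1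
  have hinj : Function.Injective (fun p : α × γ => (g p.1, p.2)) := by
    intro p q h
    simp only [Prod.ext_iff] at h ⊢
    exact ⟨hg h.1, h.2⟩
  exact P.H_comp_inj hinj (fun ω => (X ω, Z ω))

lemma H_pair_comm {α β : Type} [Fintype α] [DecidableEq α] [Fintype β] [DecidableEq β]
    (X : P.Ω → α) (Y : P.Ω → β) :
    P.H (fun ω => (X ω, Y ω)) = P.H (fun ω => (Y ω, X ω)) := by
  have : (fun ω => (Y ω, X ω)) = fun ω => (Equiv.prodComm α β) (X ω, Y ω) := rfl
  rw [this, P.H_comp_inj (Equiv.prodComm α β).injective]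

end FinProbSpace
namespace FinProbSpace

lemma mul_logb_mono {p q : ℝ} (hp : 0 ≤ p) (hpq : p ≤ q) :
    p * Real.logb 2 p ≤ p * Real.logb 2 q := by
  rcases eq_or_lt_of_le hp with h | h
  · simp [← h]
  · exact mul_le_mul_of_nonneg_left (Real.logb_le_logb_of_le one_lt_two h hpq) hp

variable (P : FinProbSpace)

lemma H_snd_le_H_pair {α β : Type} [Fintype α] [DecidableEq α] [Fintype β] [DecidableEq β]
    (X : P.Ω → α) (Y : P.Ω → β) :
    P.H Y ≤ P.H (fun ω => (X ω, Y ω)) := by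
  unfold H
  rw [Fintype.sum_prod_type_right]
  apply Finset.sum_le_sum
  intro b _
  have hq : ∑ a, P.prob (fun ω => (X ω, Y ω)) (a, b) = P.prob Y b := P.prob_pair_left X Y b
  have expand : -(P.prob Y b * Real.logb 2 (P.prob Y b)) =
      ∑ a, -(P.prob (fun ω => (X ω, Y ω)) (a, b) * Real.logb 2 (P.prob Y b)) := by
    rw [← hq, Finset.sum_mul, ← Finset.sum_neg_distrib]
  rw [expand]
  apply Finset.sum_le_sum
  intro a _
  have h1 := P.prob_nonneg (fun ω => (X ω, Y ω)) (a, b)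
  have h2 : P.prob (fun ω => (X ω, Y ω)) (a, b) ≤ P.prob Y b :=
    P.prob_mono (fun ω h => by simp [Prod.ext_iff] at h; exact h.2)
  exact neg_le_neg (mul_logb_mono h1 h2)

lemma condH_nonneg {α β : Type} [Fintype α] [DecidableEq α] [Fintype β] [DecidableEq β]
    (X : P.Ω → α) (Y : P.Ω → β) : 0 ≤ P.condH X Y := by
  have := P.H_snd_le_H_pair X Y
  unfold condH
  linarith

end FinProbSpace
namespace FinProbSpace

variable (P : FinProbSpace)

lemma sum_swap3 {α β γ : Type} [Fintype α] [Fintype β] [Fintype γ] (f : α → β → γ → ℝ) :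
    ∑ a : α, ∑ b : β, ∑ c : γ, f a b c = ∑ b, ∑ c, ∑ a, f a b c := by
  rw [Finset.sum_comm]
  exact Finset.sum_congr rfl fun b _ => Finset.sum_comm

lemma H_submod {α β γ : Type} [Fintype α] [DecidableEq α] [Fintype β] [DecidableEq β]
    [Fintype γ] [DecidableEq γ] (X : P.Ω → α) (Y : P.Ω → β) (Z : P.Ω → γ) :
    P.H (fun ω => (X ω, Y ω, Z ω)) + P.H Z ≤
      P.H (fun ω => (Y ω, Z ω)) + P.H (fun ω => (X ω, Z ω)) := by
  classical
  set p : α → β → γ → ℝ := fun a b c => P.prob (fun ω => (X ω, Y ω, Z ω)) (a, b, c) with hpdef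
  set q : β → γ → ℝ := fun b c => P.prob (fun ω => (Y ω, Z ω)) (b, c) with hqdef
  set t : α → γ → ℝ := fun a c => P.prob (fun ω => (X ω, Z ω)) (a, c) with htdef
  set r : γ → ℝ := fun c => P.prob Z c with hrdef
  have hq : ∀ b c, ∑ a, p a b c = q b c := fun b c => P.prob3_YZ X Y Z b c
  have ht : ∀ a c, ∑ b, p a b c = t a c := fun a c => P.prob3_XZ X Y Z a c
  have hr : ∀ c, ∑ a, ∑ b, p a b c = r c := fun c => P.prob3_Z X Y Z c
  have htr : ∀ c, ∑ a, t a c = r c := by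
    intro c
    rw [← hr c]
    exact Finset.sum_congr rfl fun a _ => (ht a c).symm
  have hpn : ∀ a b c, 0 ≤ p a b c := fun a b c => P.prob_nonneg _ _
  have hqn : ∀ b c, 0 ≤ q b c := fun b c => P.prob_nonneg _ _
  have htn : ∀ a c, 0 ≤ t a c := fun a c => P.prob_nonneg _ _
  have hrn : ∀ c, 0 ≤ r c := fun c => P.prob_nonneg _ _
  have hpq : ∀ a b c, p a b c ≤ q b c := fun a b c =>
    P.prob_mono (fun ω h => by simp [Prod.ext_iff] at h ⊢; tauto)
  have hpt : ∀ a b c, p a b c ≤ t a c := fun a b c =>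
    P.prob_mono (fun ω h => by simp [Prod.ext_iff] at h ⊢; tauto)
  have hpr : ∀ a b c, p a b c ≤ r c := fun a b c =>
    P.prob_mono (fun ω h => by simp [Prod.ext_iff] at h ⊢; tauto)
  have l2 : (0:ℝ) < Real.log 2 := Real.log_pos one_lt_two
  -- pull a constant out of a sum of negated products
  have pull : ∀ {ι : Type} [Fintype ι] (f : ι → ℝ) (C : ℝ),
      ∑ i, -(f i * C) = -((∑ i, f i) * C) := by
    intro ι _ f C
    rw [Finset.sum_neg_distrib, Finset.sum_mul]
  -- express all entropies as triple sums
  have eH3 : P.H (fun ω => (X ω, Y ω, Z ω)) =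
      ∑ a, ∑ b, ∑ c, -(p a b c * Real.logb 2 (p a b c)) := by
    unfold H
    rw [Fintype.sum_prod_type]
    exact Finset.sum_congr rfl fun a _ => by rw [Fintype.sum_prod_type]
  have eHZ : P.H Z = ∑ a, ∑ b, ∑ c, -(p a b c * Real.logb 2 (r c)) := by
    unfold H
    rw [sum_swap3 (fun a b c => -(p a b c * Real.logb 2 (r c))), Finset.sum_comm]
    refine Finset.sum_congr rfl fun c _ => ?_
    rw [show ∑ b, ∑ a, -(p a b c * Real.logb 2 (r c)) =
        ∑ b, -((∑ a, p a b c) * Real.logb 2 (r c)) from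
      Finset.sum_congr rfl fun b _ => pull _ _, pull, Finset.sum_comm, hr c]
  have eHYZ : P.H (fun ω => (Y ω, Z ω)) =
      ∑ a, ∑ b, ∑ c, -(p a b c * Real.logb 2 (q b c)) := by
    unfold H
    rw [Fintype.sum_prod_type, sum_swap3 (fun a b c => -(p a b c * Real.logb 2 (q b c)))]
    refine Finset.sum_congr rfl fun b _ => Finset.sum_congr rfl fun c _ => ?_
    rw [pull, hq b c]
  have eHXZ : P.H (fun ω => (X ω, Z ω)) =
      ∑ a, ∑ b, ∑ c, -(p a b c * Real.logb 2 (t a c)) := by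
    unfold H
    rw [Fintype.sum_prod_type]
    refine Finset.sum_congr rfl fun a _ => ?_
    rw [Finset.sum_comm]
    refine Finset.sum_congr rfl fun c _ => ?_
    rw [pull, ht a c]
  -- the total probability sums
  have hsum_p : ∑ a, ∑ b, ∑ c, p a b c = 1 := by
    have := P.sum_prob (fun ω => (X ω, Y ω, Z ω))
    rw [Fintype.sum_prod_type] at this
    simp only [Fintype.sum_prod_type] at this
    exact this
  have hsum_q : ∑ b, ∑ c, q b c = 1 := by
    have := P.sum_prob (fun ω => (Y ω, Z ω))
    rw [Fintype.sum_prod_type] at this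
    exact this
  have hsum_s : ∑ a, ∑ b, ∑ c, q b c * t a c / r c ≤ 1 := by
    rw [sum_swap3]
    calc ∑ b, ∑ c, ∑ a, q b c * t a c / r c
        = ∑ b, ∑ c, q b c * r c / r c := by
          refine Finset.sum_congr rfl fun b _ => Finset.sum_congr rfl fun c _ => ?_
          rw [← Finset.sum_div, ← Finset.mul_sum, htr c]
      _ ≤ ∑ b, ∑ c, q b c := by
          refine Finset.sum_le_sum fun b _ => Finset.sum_le_sum fun c _ => ?_
          rcases eq_or_ne (r c) 0 with h | h
          · simp [h, hqn b c]
          · rw [mul_div_assoc, div_self h, mul_one]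
      _ = 1 := hsum_q
  -- key pointwise inequality
  have key : ∀ a b c,
      -(p a b c * Real.logb 2 (p a b c)) + -(p a b c * Real.logb 2 (r c)) ≤
      -(p a b c * Real.logb 2 (q b c)) + -(p a b c * Real.logb 2 (t a c)) +
        (q b c * t a c / r c - p a b c) / Real.log 2 := by
    intro a b c
    rcases eq_or_lt_of_le (hpn a b c) with h0 | h0
    · rw [← h0]
      simp only [zero_mul, neg_zero, add_zero, zero_add, sub_zero]
      exact div_nonneg (div_nonneg (mul_nonneg (hqn b c) (htn a c)) (hrn c)) l2.le
    · have hq0 : 0 < q b c := lt_of_lt_of_le h0 (hpq a b c)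
      have ht0 : 0 < t a c := lt_of_lt_of_le h0 (hpt a b c)
      have hr0 : 0 < r c := lt_of_lt_of_le h0 (hpr a b c)
      have hexp : Real.log (q b c * t a c / (p a b c * r c)) =
          Real.log (q b c) + Real.log (t a c) - Real.log (p a b c) - Real.log (r c) := by
        rw [Real.log_div (by positivity) (by positivity),
          Real.log_mul hq0.ne' ht0.ne', Real.log_mul h0.ne' hr0.ne']
        ring
      have hlog : Real.log (q b c * t a c / (p a b c * r c)) ≤
          q b c * t a c / (p a b c * r c) - 1 :=
        Real.log_le_sub_one_of_pos (by positivity)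
      have hmul : p a b c * (q b c * t a c / (p a b c * r c) - 1) =
          q b c * t a c / r c - p a b c := by
        field_simp
      have h2 : p a b c * Real.log (q b c * t a c / (p a b c * r c)) ≤
          q b c * t a c / r c - p a b c := by
        calc p a b c * Real.log (q b c * t a c / (p a b c * r c))
            ≤ p a b c * (q b c * t a c / (p a b c * r c) - 1) :=
              mul_le_mul_of_nonneg_left hlog h0.le
          _ = q b c * t a c / r c - p a b c := hmul
      have hD : -(p a b c * Real.logb 2 (p a b c)) + -(p a b c * Real.logb 2 (r c)) +
          p a b c * Real.logb 2 (q b c) + p a b c * Real.logb 2 (t a c) =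
          p a b c * Real.log (q b c * t a c / (p a b c * r c)) / Real.log 2 := by
        simp only [Real.logb]
        rw [hexp]
        ring
      have hE : p a b c * Real.log (q b c * t a c / (p a b c * r c)) / Real.log 2 ≤
          (q b c * t a c / r c - p a b c) / Real.log 2 :=
        (div_le_div_iff_of_pos_right l2).mpr h2
      linarith
  -- assemble
  rw [eH3, eHZ, eHYZ, eHXZ]
  have step1 : ∑ a, ∑ b, ∑ c,
      (-(p a b c * Real.logb 2 (p a b c)) + -(p a b c * Real.logb 2 (r c))) ≤
      ∑ a, ∑ b, ∑ c,
      (-(p a b c * Real.logb 2 (q b c)) + -(p a b c * Real.logb 2 (t a c)) +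
        (q b c * t a c / r c - p a b c) / Real.log 2) :=
    Finset.sum_le_sum fun a _ => Finset.sum_le_sum fun b _ =>
      Finset.sum_le_sum fun c _ => key a b c
  have step2 : ∑ a, ∑ b, ∑ c, (q b c * t a c / r c - p a b c) / Real.log 2 ≤ 0 := by
    have e1 : ∑ a, ∑ b, ∑ c, (q b c * t a c / r c - p a b c) / Real.log 2 =
        (∑ a, ∑ b, ∑ c, (q b c * t a c / r c - p a b c)) / Real.log 2 := by
      simp only [← Finset.sum_div]
    rw [e1]
    apply div_nonpos_of_nonpos_of_nonneg _ l2.le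
    simp only [Finset.sum_sub_distrib]
    rw [hsum_p]
    linarith [hsum_s]
  simp only [Finset.sum_add_distrib] at step1
  linarith

lemma condH_cond_pair_le {α β γ : Type} [Fintype α] [DecidableEq α] [Fintype β] [DecidableEq β]
    [Fintype γ] [DecidableEq γ] (X : P.Ω → α) (Y : P.Ω → β) (Z : P.Ω → γ) :
    P.condH X (fun ω => (Y ω, Z ω)) ≤ P.condH X Z := by
  have := P.H_submod X Y Z
  unfold condH
  have e : P.H (fun ω => (X ω, Y ω, Z ω)) = P.H (fun ω => (X ω, (Y ω, Z ω))) := rfl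
  rw [e] at this
  linarith

end FinProbSpace
namespace FinProbSpace

variable (P : FinProbSpace)

lemma H_unit : P.H (fun _ : P.Ω => ()) = 0 := by
  unfold H prob
  simp [P.sum_one]

lemma condH_le_H {α γ : Type} [Fintype α] [DecidableEq α] [Fintype γ] [DecidableEq γ]
    (X : P.Ω → α) (Z : P.Ω → γ) : P.condH X Z ≤ P.H X := by
  have h := P.condH_cond_pair_le X Z (fun _ => ())
  have e1 : P.condH X (fun ω => (Z ω, ())) = P.condH X Z := by
    unfold condH
    have hinj : Function.Injective (fun u : α × γ => (u.1, (u.2, ()))) := by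
      intro u v h; simp only [Prod.ext_iff] at h ⊢; tauto
    have hinj2 : Function.Injective (fun c : γ => (c, ())) := by
      intro u v h; simp only [Prod.ext_iff] at h; tauto
    have e := P.H_comp_inj hinj (fun ω => (X ω, Z ω))
    have e' := P.H_comp_inj hinj2 Z
    simp only at e e'
    rw [e, e']
  have e2 : P.condH X (fun _ : P.Ω => ()) = P.H X := by
    unfold condH
    have hinj : Function.Injective (fun a : α => (a, ())) := by
      intro u v h; simp only [Prod.ext_iff] at h; tauto
    have e := P.H_comp_inj hinj X
    rw [e, P.H_unit, sub_zero]
  rw [e1, e2] at h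
  exact h

lemma condH_chain {α β γ : Type} [Fintype α] [DecidableEq α] [Fintype β] [DecidableEq β]
    [Fintype γ] [DecidableEq γ] (X : P.Ω → α) (Y : P.Ω → β) (Z : P.Ω → γ) :
    P.condH (fun ω => (X ω, Y ω)) Z = P.condH X Z + P.condH Y (fun ω => (X ω, Z ω)) := by
  unfold condH
  have hinj : Function.Injective (fun u : β × α × γ => ((u.2.1, u.1), u.2.2)) := by
    intro u v h; simp only [Prod.ext_iff] at h ⊢; tauto
  have e := P.H_comp_inj hinj (fun ω => (Y ω, (X ω, Z ω)))
  simp only at e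
  rw [← e]
  ring

lemma condH_comm_cond {α β γ : Type} [Fintype α] [DecidableEq α] [Fintype β] [DecidableEq β]
    [Fintype γ] [DecidableEq γ] (X : P.Ω → α) (Y : P.Ω → β) (Z : P.Ω → γ) :
    P.condH X (fun ω => (Y ω, Z ω)) = P.condH X (fun ω => (Z ω, Y ω)) := by
  unfold condH
  have hinj : Function.Injective (fun u : α × β × γ => (u.1, (u.2.2, u.2.1))) := by
    intro u v h; simp only [Prod.ext_iff] at h ⊢; tauto
  have e := P.H_comp_inj hinj (fun ω => (X ω, (Y ω, Z ω)))
  simp only at e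
  rw [← e, P.H_pair_comm Y Z]

lemma phi_mul {x y : ℝ} (hx : 0 ≤ x) (hy : 0 ≤ y) :
    -(x * y * Real.logb 2 (x * y)) =
      y * -(x * Real.logb 2 x) + x * -(y * Real.logb 2 y) := by
  rcases eq_or_lt_of_le hx with h | h
  · simp [← h]
  rcases eq_or_lt_of_le hy with h' | h'
  · simp [← h']
  rw [Real.logb_mul h.ne' h'.ne']
  ring

lemma H_pair_of_indep {α β : Type} [Fintype α] [DecidableEq α] [Fintype β] [DecidableEq β]
    (X : P.Ω → α) (Y : P.Ω → β)
    (h : ∀ a b, P.prob (fun ω => (X ω, Y ω)) (a, b) = P.prob X a * P.prob Y b) :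
    P.H (fun ω => (X ω, Y ω)) = P.H X + P.H Y := by
  unfold H
  rw [Fintype.sum_prod_type]
  have e : ∀ a b, -(P.prob (fun ω => (X ω, Y ω)) (a, b) *
      Real.logb 2 (P.prob (fun ω => (X ω, Y ω)) (a, b))) =
      P.prob Y b * -(P.prob X a * Real.logb 2 (P.prob X a)) +
      P.prob X a * -(P.prob Y b * Real.logb 2 (P.prob Y b)) := by
    intro a b
    rw [h a b]
    exact phi_mul (P.prob_nonneg X a) (P.prob_nonneg Y b)
  rw [Finset.sum_congr rfl fun a _ => Finset.sum_congr rfl fun b _ => e a b]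
  simp only [Finset.sum_add_distrib]
  congr 1
  · refine Finset.sum_congr rfl fun a _ => ?_
    rw [← Finset.sum_mul, P.sum_prob Y, one_mul]
  · have e2 : ∀ a, ∑ b, P.prob X a * -(P.prob Y b * Real.logb 2 (P.prob Y b)) =
        P.prob X a * ∑ b, -(P.prob Y b * Real.logb 2 (P.prob Y b)) := fun a =>
      (Finset.mul_sum _ _ _).symm
    rw [Finset.sum_congr rfl fun a _ => e2 a, ← Finset.sum_mul, P.sum_prob X, one_mul]

end FinProbSpace
namespace FinProbSpace

variable (P : FinProbSpace)

lemma condH_le_condH_pair_left {α β γ : Type} [Fintype α] [DecidableEq α] [Fintype β]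
    [DecidableEq β] [Fintype γ] [DecidableEq γ] (X : P.Ω → α) (Y : P.Ω → β) (Z : P.Ω → γ) :
    P.condH X Z ≤ P.condH (fun ω => (Y ω, X ω)) Z := by
  unfold condH
  have h := P.H_snd_le_H_pair Y (fun ω => (X ω, Z ω))
  have hinj : Function.Injective (fun u : β × α × γ => ((u.1, u.2.1), u.2.2)) := by
    intro u v h; simp only [Prod.ext_iff] at h ⊢; tauto
  have e := P.H_comp_inj hinj (fun ω => (Y ω, (X ω, Z ω)))
  simp only at e
  linarith

lemma condH_compl_eq {V : Type} [Fintype V] [DecidableEq V] {K : ℕ}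
    (W : Fin K → P.Ω → V) (hind : P.iIndep W) (k : Fin K) :
    P.condH (W k) (P.tuple fun j : {x // x ∈ ({k}ᶜ : Finset (Fin K))} => W j.1) =
      P.H (W k) := by
  classical
  set s : Finset (Fin K) := {k}ᶜ with hs
  set Z : P.Ω → ({x // x ∈ s} → V) := P.tuple fun j : {x // x ∈ s} => W j.1 with hZdef
  set g : ({x // x ∈ s} → V) → ℝ := fun v => ∏ j ∈ s.attach, P.prob (W j.1) (v j) with hgdef
  have haux : ∀ (a : V) (v : {x // x ∈ s} → V),
      P.prob (fun ω => (W k ω, Z ω)) (a, v) = P.prob (W k) a * g v := by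
    intro a v
    set u0 : Fin K → V := fun j => if h : j ∈ s then v ⟨j, h⟩ else a with hu0
    have hu0k : u0 k = a := by
      have : k ∉ s := by simp [hs]
      exact dif_neg this
    have hiff : ∀ ω, ((W k ω = a) ∧ Z ω = v) ↔ (P.tuple W ω = u0) := by
      intro ω
      constructor
      · rintro ⟨h1, h2⟩
        funext j
        show W j ω = u0 j
        by_cases hj : j ∈ s
        · have e' : u0 j = v ⟨j, hj⟩ := dif_pos hj
          rw [e']
          exact congrFun h2 ⟨j, hj⟩
        · have hjk : j = k := by
            by_contra hc
            exact hj (by simp [hs, hc])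
          have e' : u0 j = a := dif_neg hj
          rw [e', hjk]
          exact h1
      · intro h
        have hW : ∀ j, W j ω = u0 j := fun j => congrFun h j
        refine ⟨?_, ?_⟩
        · rw [show W k ω = u0 k from hW k, hu0k]
        · funext j
          show W j.1 ω = v j
          rw [hW j.1]
          exact dif_pos j.2
    have hprob : P.prob (fun ω => (W k ω, Z ω)) (a, v) = P.prob (P.tuple W) u0 := by
      unfold prob
      refine Finset.sum_congr rfl fun ω _ => if_congr ?_ rfl rfl
      show ((W k ω, Z ω) = (a, v)) ↔ _
      rw [Prod.ext_iff]
      exact hiff ω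
    rw [hprob, hind u0, ← Finset.mul_prod_erase Finset.univ _ (Finset.mem_univ k), hu0k]
    congr 1
    have hce : Finset.univ.erase k = s := by
      ext j; simp [hs]
    rw [hce, ← Finset.prod_attach s (fun j => P.prob (W j) (u0 j))]
    refine Finset.prod_congr rfl fun j _ => ?_
    congr 1
    exact dif_pos j.2
  have hZv : ∀ v, P.prob Z v = g v := by
    intro v
    rw [← P.prob_pair_left (W k) Z v,
      Finset.sum_congr rfl fun a _ => haux a v, ← Finset.sum_mul, P.sum_prob (W k), one_mul]
  have hfact : ∀ a v, P.prob (fun ω => (W k ω, Z ω)) (a, v) =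
      P.prob (W k) a * P.prob Z v := by
    intro a v
    rw [haux a v, hZv v]
  unfold condH
  rw [P.H_pair_of_indep (W k) Z hfact]
  ring

lemma condH_tuple_le_sum {V ζ : Type} [Fintype V] [DecidableEq V] [Fintype ζ] [DecidableEq ζ]
    {M : ℕ} (X : Fin M → P.Ω → V) (Z : P.Ω → ζ) (s : Finset (Fin M)) :
    P.condH (P.tuple fun j : {x // x ∈ s} => X j.1) Z ≤ ∑ j ∈ s, P.condH (X j) Z := by
  classical
  induction s using Finset.induction with
  | empty =>
    simp only [Finset.sum_empty]
    have e0 : {x // x ∈ (∅ : Finset (Fin M))} → V :=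
      fun j => absurd j.2 (Finset.notMem_empty j.1)
    have hempty : ∀ f : {x // x ∈ (∅ : Finset (Fin M))} → V, f = e0 := by
      intro f; funext j; exact absurd j.2 (Finset.notMem_empty j.1)
    have hinj : Function.Injective (fun c : ζ => (e0, c)) := by
      intro u v h
      exact (Prod.ext_iff.mp h).2
    have hfun : (fun ω => (P.tuple (fun j : {x // x ∈ (∅ : Finset (Fin M))} => X j.1) ω, Z ω))
        = fun ω => (e0, Z ω) := by
      funext ω
      exact congrArg (fun t => (t, Z ω)) (hempty _)
    unfold condH
    rw [hfun]
    have e := P.H_comp_inj hinj Z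
    rw [e]
    simp
  | @insert a s ha ih =>
    have hg : Function.Injective (fun v : ({x // x ∈ insert a s} → V) =>
        (v ⟨a, Finset.mem_insert_self a s⟩,
         fun j : {x // x ∈ s} => v ⟨j.1, Finset.mem_insert_of_mem j.2⟩)) := by
      intro u w h
      obtain ⟨h1, h2⟩ := Prod.ext_iff.mp h
      funext j
      rcases Finset.mem_insert.mp j.2 with hj | hj
      · have hj' : j = ⟨a, Finset.mem_insert_self a s⟩ := Subtype.ext hj
        rw [hj']
        exact h1
      · exact congrFun h2 ⟨j.1, hj⟩
    have e := P.condH_comp_inj hg (P.tuple fun j : {x // x ∈ insert a s} => X j.1) Z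
    calc P.condH (P.tuple fun j : {x // x ∈ insert a s} => X j.1) Z
        = P.condH (fun ω => (X a ω, P.tuple (fun j : {x // x ∈ s} => X j.1) ω)) Z := e.symm
      _ ≤ P.condH (X a) Z + P.condH (P.tuple fun j : {x // x ∈ s} => X j.1) Z := by
          rw [P.condH_chain (X a) (P.tuple fun j : {x // x ∈ s} => X j.1) Z]
          have := P.condH_cond_pair_le (P.tuple fun j : {x // x ∈ s} => X j.1) (X a) Z
          linarith
      _ ≤ P.condH (X a) Z + ∑ j ∈ s, P.condH (X j) Z := by linarith [ih]
      _ = ∑ j ∈ insert a s, P.condH (X j) Z := by rw [Finset.sum_insert ha]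

end FinProbSpace

lemma Cstar_gt_sub_one {N K : ℕ} (hN : 2 ≤ N) (hK : 1 ≤ K) :
    ((N : ℝ) - 1) < Cstar N K := by
  have hN' : (2:ℝ) ≤ N := by exact_mod_cast hN
  have hN0 : (0:ℝ) < N := by linarith
  have hr1 : (1:ℝ)/N < 1 := by rw [div_lt_one hN0]; linarith
  have hr0 : (0:ℝ) < 1/N := by positivity
  have hpos : 0 < ∑ j ∈ Finset.range K, (1/(N:ℝ))^j :=
    Finset.sum_pos (fun i _ => pow_pos hr0 i) (Finset.nonempty_range_iff.mpr (by omega))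
  have hNne : (N:ℝ) ≠ 0 := ne_of_gt hN0
  unfold Cstar
  rw [lt_div_iff₀ hpos]
  have hK0 : 0 < (1/(N:ℝ))^K := pow_pos hr0 K
  have step : ∀ j : ℕ, ((N:ℝ)-1) * (1/N)^j = (N:ℝ)*(1/N)^j - N*(1/N)^(j+1) := by
    intro j
    have hNinv : (N:ℝ) * (1/N)^(j+1) = (1/N)^j := by
      rw [pow_succ]
      calc (N:ℝ) * ((1/N)^j * (1/N)) = (1/N)^j * ((N:ℝ) * (1/N)) := by ring
        _ = (1/N)^j := by rw [mul_one_div, div_self hNne, mul_one]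
    rw [hNinv]
    ring
  have e : ((N:ℝ)-1) * ∑ j ∈ Finset.range K, (1/(N:ℝ))^j = N - N * (1/N)^K := by
    rw [Finset.mul_sum, Finset.sum_congr rfl fun j _ => step j,
      Finset.sum_range_sub' (fun j => (N:ℝ)*(1/N)^j) K]
    simp
  rw [e]
  have hpos2 : 0 < (N:ℝ) * (1/N)^K := mul_pos hN0 hK0
  linarith

/-- Non-zero entropy property, Lemma 3, Property 1: in a capacity
achieving ULDC, `H(X_i | W_k̄) > 0` for every coded symbol `X_i` and every `k`. -/
theorem uldc_nonzero_entropy (K N M : ℕ) (hK : 1 ≤ K) (hN : 2 ≤ N) (Lw Lx : ℝ)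
    (hLw : 0 < Lw) (C : LDC K N M Lw Lx) (hU : C.IsUniversal)
    (hcap : Lw / Lx = Cstar N K) (i : Fin M) (k : Fin K) :
    0 < C.P.condH (C.X i)
      (C.P.tuple fun j : {x // x ∈ ({k}ᶜ : Finset (Fin K))} => C.W j.1) := by
  classical
  set Zf : C.P.Ω → ({x // x ∈ ({k}ᶜ : Finset (Fin K))} → C.V) :=
    C.P.tuple fun j : {x // x ∈ ({k}ᶜ : Finset (Fin K))} => C.W j.1 with hZf
  by_contra hcon
  push_neg at hcon
  -- basic facts about Lx and Cstar
  have hLx_nonneg : 0 ≤ Lx := by rw [← C.HX i]; exact C.P.H_nonneg _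
  have hCstar : ((N:ℝ) - 1) < Cstar N K := Cstar_gt_sub_one hN hK
  have hN2 : (2:ℝ) ≤ N := by exact_mod_cast hN
  have hCpos : 0 < Cstar N K := by linarith
  have hLx_pos : 0 < Lx := by
    rcases eq_or_lt_of_le hLx_nonneg with h | h
    · rw [← h, div_zero] at hcap
      linarith
    · exact h
  have hLw_eq : Lw = Cstar N K * Lx := by
    rw [div_eq_iff (ne_of_gt hLx_pos)] at hcap
    linarith [hcap]
  -- pick a decoding set for k containing i
  obtain ⟨S, hS, hiS⟩ := hU i k
  have hcard : S.card = N := C.decSets_card k S hS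
  have hdec : C.P.condH (C.W k) (C.P.tuple fun j : {x // x ∈ S} => C.X j.1) = 0 :=
    C.decodes k S hS
  set T : C.P.Ω → ({x // x ∈ S} → C.V') :=
    C.P.tuple fun j : {x // x ∈ S} => C.X j.1 with hT
  -- step 1 : Lw = H(W k | W_{k̄})
  have h1 : C.P.condH (C.W k) Zf = Lw := by
    rw [hZf, C.P.condH_compl_eq C.W C.indep k, C.HW k]
  -- step 2 : H(W k | Z) ≤ H(T | Z)
  have hmono : C.P.condH (C.W k) Zf ≤ C.P.condH (fun ω => (T ω, C.W k ω)) Zf :=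
    C.P.condH_le_condH_pair_left (C.W k) T Zf
  have hchain : C.P.condH (fun ω => (T ω, C.W k ω)) Zf =
      C.P.condH T Zf + C.P.condH (C.W k) (fun ω => (T ω, Zf ω)) :=
    C.P.condH_chain T (C.W k) Zf
  have hWTZ : C.P.condH (C.W k) (fun ω => (T ω, Zf ω)) ≤ 0 := by
    have e := C.P.condH_comm_cond (C.W k) T Zf
    have h := C.P.condH_cond_pair_le (C.W k) Zf T
    rw [e] at *
    rw [hT] at h ⊢
    calc C.P.condH (C.W k) (fun ω => (Zf ω, (C.P.tuple fun j : {x // x ∈ S} => C.X j.1) ω)) ≤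
        C.P.condH (C.W k) (C.P.tuple fun j : {x // x ∈ S} => C.X j.1) := h
      _ = 0 := hdec
  -- step 3 : subadditivity
  have hsub : C.P.condH T Zf ≤ ∑ j ∈ S, C.P.condH (C.X j) Zf :=
    C.P.condH_tuple_le_sum C.X Zf S
  -- step 4 : bound the sum
  have hbound : ∑ j ∈ S, C.P.condH (C.X j) Zf ≤ ((N:ℝ) - 1) * Lx := by
    rw [← Finset.add_sum_erase S _ hiS]
    have h_each : ∀ j ∈ S.erase i, C.P.condH (C.X j) Zf ≤ Lx := by
      intro j _
      calc C.P.condH (C.X j) Zf ≤ C.P.H (C.X j) := C.P.condH_le_H (C.X j) Zf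
        _ = Lx := C.HX j
    have hsum := Finset.sum_le_card_nsmul (S.erase i) _ Lx h_each
    have hcard' : (S.erase i).card = N - 1 := by
      rw [Finset.card_erase_of_mem hiS, hcard]
    rw [hcard'] at hsum
    have hcast : ((N - 1 : ℕ) : ℝ) = (N : ℝ) - 1 := by
      have : 1 ≤ N := by omega
      push_cast [this]
      ring
    have hsum' : ∑ j ∈ S.erase i, C.P.condH (C.X j) Zf ≤ ((N:ℝ) - 1) * Lx := by
      rw [nsmul_eq_mul, hcast] at hsum
      exact hsum
    linarith [hcon]
  -- combine
  have hfinal : Lw ≤ ((N:ℝ) - 1) * Lx := by linarith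
  have : ((N:ℝ) - 1) * Lx < Cstar N K * Lx := mul_lt_mul_of_pos_right hCstar hLx_pos
  linarith
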